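/- arXiv:1511.06473 — 4 statements merged into one kernel-verified Lean document; each statement's English description precedes it below -/
import Mathlib

section
/- Let A ⊆ B be an integral ring extension and let J be the nilradical of B. Then the extension A ⊆ B is apparently fragile (respectively fragile, respectively globally fragile) if and only if J ⊆ A (so J is the nilradical of both A and B) and the induced extension A/J ⊆ B/J is apparently fragile (respectively fragile, respectively globally fragile). -/
/-- A ring homomorphism `f : A →+* B` satisfies going-down: whenever `p₁ ⊆ p₂` are primes of `A`
and `Q₂` is a prime of `B` contracting to `p₂`, there is a prime `Q₁ ⊆ Q₂` of `B`
contracting to `p₁`. -/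
def GoingDownHom {A B : Type*} [CommRing A] [CommRing B] (f : A →+* B) : Prop :=
  ∀ (p₁ p₂ : Ideal A), p₁.IsPrime → p₂.IsPrime → p₁ ≤ p₂ →
    ∀ Q₂ : Ideal B, Q₂.IsPrime → Q₂.comap f = p₂ →
      ∃ Q₁ : Ideal B, Q₁.IsPrime ∧ Q₁ ≤ Q₂ ∧ Q₁.comap f = p₁

/-- The canonical map from the localization of a subring `A ⊆ B` at a submonoid `W ⊆ A`
to the localization of `B` at the image of `W` in `B`. -/
noncomputable def locMap {B : Type*} [CommRing B] (A : Subring B) (W : Submonoid A) :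
    Localization W →+* Localization (W.map A.subtype) :=
  IsLocalization.lift (M := W) (S := Localization W)
    (g := (algebraMap B (Localization (W.map A.subtype))).comp A.subtype)
    (fun y => IsLocalization.map_units (M := W.map A.subtype) (Localization (W.map A.subtype))
      ⟨A.subtype y, ⟨y, y.2, rfl⟩⟩)

/-- A subring `A ⊆ B` is perinormal in `B` at the prime `p` of `A`:  the localization `A_p`
(i.e. the image of `Localization.AtPrime p` in `B_{A∖p}`) is the only local ring `T` between
`A_p` and `B_{A∖p}` whose maximal ideal contracts to `pA_p` and which satisfies going-down
over `A_p`. -/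
def PeriAt {B : Type*} [CommRing B] (A : Subring B) (p : Ideal A) (hp : p.IsPrime) : Prop :=
  haveI := hp
  ∀ (T : Subring (Localization (p.primeCompl.map A.subtype)))
    (hT : (locMap A p.primeCompl).range ≤ T),
    IsLocalRing T →
    (∀ M : Ideal T, M.IsMaximal →
      M.comap ((locMap A p.primeCompl).codRestrict T (fun x => hT ⟨x, rfl⟩)) =
        IsLocalRing.maximalIdeal (Localization.AtPrime p)) →
    GoingDownHom ((locMap A p.primeCompl).codRestrict T (fun x => hT ⟨x, rfl⟩)) →
    T = (locMap A p.primeCompl).range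

/-- A subring `A` of `B` is perinormal in `B`. -/
def PerinormalIn {B : Type*} [CommRing B] (A : Subring B) : Prop :=
  ∀ (p : Ideal A) (hp : p.IsPrime), PeriAt A p hp

/-- An integral domain `R` is perinormal:  every local overring of `R`
(local ring between `R` and its fraction field) satisfying going-down over `R`
is a localization of `R` at a prime ideal. -/
def PerinormalDomain (R : Type*) [CommRing R] [IsDomain R] : Prop :=
  ∀ (T : Subring (FractionRing R)) (hT : (algebraMap R (FractionRing R)).range ≤ T),
    IsLocalRing T →
    GoingDownHom ((algebraMap R (FractionRing R)).codRestrict T (fun x => hT ⟨x, rfl⟩)) →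
    ∃ p : Ideal R, p.IsPrime ∧
      (T : Set (FractionRing R)) =
        {x | ∃ r s : R, s ∉ p ∧
          x * algebraMap R (FractionRing R) s = algebraMap R (FractionRing R) r}

/-- A subring `A ⊆ B` is apparently fragile in `B`: for every ring `C` with `A ⊊ C ⊆ B`
there are a minimal prime `p` of `A` and distinct primes `P, Q` of `C` contracting to `p`. -/
def ApparentlyFragile {B : Type*} [CommRing B] (A : Subring B) : Prop :=
  ∀ (C : Subring B) (hAC : A ≤ C), A ≠ C →
    ∃ p ∈ minimalPrimes A, ∃ P Q : Ideal C, P.IsPrime ∧ Q.IsPrime ∧ P ≠ Q ∧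
      P.comap (Subring.inclusion hAC) = p ∧ Q.comap (Subring.inclusion hAC) = p

/-- A subring `A ⊆ B` is fragile in `B`: for every prime `P` of `A`, the extension
`A_P ⊆ B_{A∖P}` is apparently fragile. -/
def Fragile {B : Type*} [CommRing B] (A : Subring B) : Prop :=
  ∀ (P : Ideal A) (hP : P.IsPrime),
    haveI := hP
    ApparentlyFragile (locMap A P.primeCompl).range

/-- A subring `A ⊆ B` is globally fragile in `B`: for every multiplicative subset `W` of `A`,
the extension `A_W ⊆ B_W` is apparently fragile. -/
def GloballyFragile {B : Type*} [CommRing B] (A : Subring B) : Prop :=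
  ∀ W : Submonoid A, ApparentlyFragile (locMap A W).range

/-- An integral domain `S` is a generalized Krull domain: (i) `S` is the intersection of its
localizations at height-one primes (inside its fraction field), (ii) every nonzero element lies
in only finitely many height-one primes, and (iii) the localization at every height-one prime
is a valuation ring. -/
def IsGenKrull (S : Type*) [CommRing S] [IsDomain S] : Prop :=
  (∀ x : FractionRing S,
      (∀ (p : Ideal S) (hp : p.IsPrime), Order.height (⟨p, hp⟩ : PrimeSpectrum S) = 1 →
        ∃ a s : S, s ∉ p ∧ x * algebraMap S (FractionRing S) s = algebraMap S (FractionRing S) a) →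
      ∃ r : S, algebraMap S (FractionRing S) r = x) ∧
  (∀ s : S, s ≠ 0 →
      {p : Ideal S | ∃ hp : p.IsPrime, Order.height (⟨p, hp⟩ : PrimeSpectrum S) = 1 ∧ s ∈ p}.Finite) ∧
  (∀ (p : Ideal S) (hp : p.IsPrime), Order.height (⟨p, hp⟩ : PrimeSpectrum S) = 1 →
      haveI := hp
      ValuationRing (Localization.AtPrime p))

/-- A prime ideal `Q` has height one. -/
def HeightOne {S : Type*} [CommRing S] (Q : Ideal S) : Prop :=
  ∃ hQ : Q.IsPrime, Order.height (⟨Q, hQ⟩ : PrimeSpectrum S) = 1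


section AuxFragHelpers

section PrimeTransport
variable {R S : Type*} [CommRing R] [CommRing S] (f : R →+* S)
  (hf : Function.Surjective f) (hker : ∀ x ∈ RingHom.ker f, IsNilpotent x)

include hker in
lemma AuxFrag.ker_le_prime {p : Ideal R} (hp : p.IsPrime) : RingHom.ker f ≤ p := fun x hx => by
  obtain ⟨n, hn⟩ := hker x hx
  exact hp.mem_of_pow_mem n (hn ▸ p.zero_mem)

include hf hker in
lemma AuxFrag.map_prime_of_nilker {p : Ideal R} (hp : p.IsPrime) : (p.map f).IsPrime :=
  Ideal.map_isPrime_of_surjective hf (AuxFrag.ker_le_prime f hker hp)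

include hf hker in
lemma AuxFrag.comap_map_of_nilker {p : Ideal R} (hp : p.IsPrime) : (p.map f).comap f = p := by
  rw [Ideal.comap_map_of_surjective f hf, sup_eq_left]
  exact AuxFrag.ker_le_prime f hker hp

include hf hker in
lemma AuxFrag.mem_minimalPrimes_map {p : Ideal R} (hp : p ∈ minimalPrimes R) :
    p.map f ∈ minimalPrimes S := by
  obtain ⟨⟨hp1, -⟩, hpmin⟩ := hp
  refine ⟨⟨AuxFrag.map_prime_of_nilker f hf hker hp1, bot_le⟩, ?_⟩
  rintro q ⟨hq1, -⟩ hqle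
  have h1 : q.comap f ≤ p := by
    have := Ideal.comap_mono (f := f) hqle
    rwa [AuxFrag.comap_map_of_nilker f hf hker hp1] at this
  have h2 : p ≤ q.comap f := hpmin ⟨q.comap_isPrime f, bot_le⟩ h1
  have : p = q.comap f := le_antisymm h2 h1
  rw [this, Ideal.map_comap_of_surjective f hf]

include hf hker in
lemma AuxFrag.mem_minimalPrimes_comap {q : Ideal S} (hq : q ∈ minimalPrimes S) :
    q.comap f ∈ minimalPrimes R := by
  obtain ⟨⟨hq1, -⟩, hqmin⟩ := hq
  haveI := hq1
  refine ⟨⟨q.comap_isPrime f, bot_le⟩, ?_⟩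
  rintro r ⟨hr1, -⟩ hrle
  have h1 : r.map f ≤ q := by
    have := Ideal.map_mono (f := f) hrle
    rwa [Ideal.map_comap_of_surjective f hf] at this
  have h2 : q ≤ r.map f := hqmin ⟨AuxFrag.map_prime_of_nilker f hf hker hr1, bot_le⟩ h1
  have : r.map f = q := le_antisymm h1 h2
  rw [← this, AuxFrag.comap_map_of_nilker f hf hker hr1]

end PrimeTransport

section Transfer
variable {R R' : Type*} [CommRing R] [CommRing R']

lemma AuxFrag.coe_inclusion {S T : Subring R} (h : S ≤ T) (x : S) :
    (Subring.inclusion h x : R) = x := rfl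

lemma AuxFrag.isNilpotent_subtype {S : Subring R} {x : S} (h : IsNilpotent (x : R)) :
    IsNilpotent x := by
  obtain ⟨n, hn⟩ := h
  exact ⟨n, Subtype.ext (by push_cast; exact hn)⟩

/-- The ring hom between subrings induced by a hom of ambient rings. -/
def AuxFrag.subMap (f : R →+* R') (S : Subring R) (S' : Subring R')
    (h : ∀ x ∈ S, f x ∈ S') : S →+* S' :=
  (f.comp S.subtype).codRestrict S' (fun x => h x x.2)

lemma AuxFrag.subMap_surjective (f : R →+* R') (S : Subring R) (S' : Subring R')
    (h : ∀ x ∈ S, f x ∈ S') (h2 : ∀ y ∈ S', ∃ x ∈ S, f x = y) :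
    Function.Surjective (AuxFrag.subMap f S S' h) := by
  rintro ⟨y, hy⟩
  obtain ⟨x, hx, hfx⟩ := h2 y hy
  exact ⟨⟨x, hx⟩, Subtype.ext hfx⟩

lemma AuxFrag.AF_nilradical_subset (S : Subring R) (h : ApparentlyFragile S) :
    (nilradical R : Set R) ⊆ S := by
  intro x hxnil
  by_contra hxS
  let C : Subring R :=
    { carrier := {b | ∃ a ∈ S, b - a ∈ nilradical R}
      zero_mem' := ⟨0, S.zero_mem, by simp⟩
      one_mem' := ⟨1, S.one_mem, by simp⟩
      add_mem' := by
        rintro b₁ b₂ ⟨a₁, ha₁, n₁⟩ ⟨a₂, ha₂, n₂⟩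
        refine ⟨a₁ + a₂, S.add_mem ha₁ ha₂, ?_⟩
        have : b₁ + b₂ - (a₁ + a₂) = (b₁ - a₁) + (b₂ - a₂) := by ring
        rw [this]; exact Ideal.add_mem _ n₁ n₂
      neg_mem' := by
        rintro b ⟨a, ha, n⟩
        refine ⟨-a, S.neg_mem ha, ?_⟩
        have : -b - -a = -(b - a) := by ring
        rw [this]; exact neg_mem n
      mul_mem' := by
        rintro b₁ b₂ ⟨a₁, ha₁, n₁⟩ ⟨a₂, ha₂, n₂⟩
        refine ⟨a₁ * a₂, S.mul_mem ha₁ ha₂, ?_⟩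
        have : b₁ * b₂ - a₁ * a₂ = (b₁ - a₁) * b₂ + a₁ * (b₂ - a₂) := by ring
        rw [this]
        exact Ideal.add_mem _ (Ideal.mul_mem_right _ _ n₁) (Ideal.mul_mem_left _ _ n₂) }
  have hSC : S ≤ C := fun a ha => ⟨a, ha, by simp⟩
  have hxC : x ∈ C := ⟨0, S.zero_mem, by simpa using hxnil⟩
  have hne : S ≠ C := fun hcon => hxS (hcon ▸ hxC)
  obtain ⟨p, hp, P, Q, hP, hQ, hPQ, hPp, hQp⟩ := h C hSC hne
  apply hPQ
  have key : ∀ (P' Q' : Ideal C), P'.IsPrime → Q'.IsPrime →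
      P'.comap (Subring.inclusion hSC) = Q'.comap (Subring.inclusion hSC) → P' ≤ Q' := by
    intro P' Q' hP' hQ' hcq c hc
    obtain ⟨a, haS, hnil⟩ := c.2
    have hnmem : (c : R) - a ∈ C := ⟨0, S.zero_mem, by simpa using hnil⟩
    set n : C := ⟨(c : R) - a, hnmem⟩ with hn
    have hnNil : IsNilpotent n := AuxFrag.isNilpotent_subtype (mem_nilradical.mp hnil)
    have hnP' : n ∈ P' := nilradical_le_prime P' (H := hP') hnNil
    have hnQ' : n ∈ Q' := nilradical_le_prime Q' (H := hQ') hnNil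
    have haP' : Subring.inclusion hSC ⟨a, haS⟩ ∈ P' := by
      have : Subring.inclusion hSC ⟨a, haS⟩ = c - n :=
        Subtype.ext (by push_cast [hn, AuxFrag.coe_inclusion]; ring)
      rw [this]; exact Ideal.sub_mem _ hc hnP'
    have haQ' : Subring.inclusion hSC ⟨a, haS⟩ ∈ Q' := by
      have : (⟨a, haS⟩ : S) ∈ Q'.comap (Subring.inclusion hSC) := hcq ▸ haP'
      exact this
    have : c = Subring.inclusion hSC ⟨a, haS⟩ + n :=
      Subtype.ext (by push_cast [hn, AuxFrag.coe_inclusion]; ring)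
    rw [this]; exact Ideal.add_mem _ haQ' hnQ'
  exact le_antisymm (key P Q hP hQ (hPp.trans hQp.symm)) (key Q P hQ hP (hQp.trans hPp.symm))

variable (f : R →+* R') (hf : Function.Surjective f)
  (hker : ∀ x ∈ RingHom.ker f, IsNilpotent x) (S : Subring R)

include hf hker in
lemma AuxFrag.AF_map_of_surj (h : ApparentlyFragile S) : ApparentlyFragile (S.map f) := by
  intro C' hSC' hne
  set C : Subring R := C'.comap f with hC
  have hSC : S ≤ C := fun s hs => hSC' ⟨s, hs, rfl⟩
  have hCC' : ∀ x ∈ C, f x ∈ C' := fun x hx => hx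
  have hmapC : ∀ y ∈ C', ∃ x ∈ C, f x = y := by
    intro y hy
    obtain ⟨x, rfl⟩ := hf y
    exact ⟨x, hy, rfl⟩
  have hSne : S ≠ C := by
    rintro rfl
    apply hne
    ext y
    constructor
    · rintro ⟨x, hx, rfl⟩; exact hSC' ⟨x, hx, rfl⟩
    · intro hy; obtain ⟨x, hx, rfl⟩ := hmapC y hy; exact ⟨x, hx, rfl⟩
  obtain ⟨p, hp, P, Q, hP, hQ, hPQ, hPp, hQp⟩ := h C hSC hSne
  set eS : S →+* S.map f := AuxFrag.subMap f S _ (fun x hx => ⟨x, hx, rfl⟩) with heS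
  set eC : C →+* C' := AuxFrag.subMap f C C' hCC' with heC
  have heSsurj : Function.Surjective eS :=
    AuxFrag.subMap_surjective _ _ _ _ (by rintro y ⟨x, hx, rfl⟩; exact ⟨x, hx, rfl⟩)
  have heCsurj : Function.Surjective eC := AuxFrag.subMap_surjective _ _ _ _ hmapC
  have heSker : ∀ x ∈ RingHom.ker eS, IsNilpotent x := by
    intro x hx
    have hx' : f (x : R) = 0 := congrArg Subtype.val hx
    exact AuxFrag.isNilpotent_subtype (hker _ (by simpa [RingHom.mem_ker] using hx'))
  have heCker : ∀ x ∈ RingHom.ker eC, IsNilpotent x := by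
    intro x hx
    have hx' : f (x : R) = 0 := congrArg Subtype.val hx
    exact AuxFrag.isNilpotent_subtype (hker _ (by simpa [RingHom.mem_ker] using hx'))
  have hsq : (Subring.inclusion hSC').comp eS = eC.comp (Subring.inclusion hSC) :=
    RingHom.ext fun s => Subtype.ext rfl
  have hcomp : ∀ X : Ideal C',
      (X.comap (Subring.inclusion hSC')).comap eS
        = (X.comap eC).comap (Subring.inclusion hSC) := by
    intro X
    rw [Ideal.comap_comap, Ideal.comap_comap, hsq]
  refine ⟨p.map eS, AuxFrag.mem_minimalPrimes_map eS heSsurj heSker hp,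
    P.map eC, Q.map eC,
    AuxFrag.map_prime_of_nilker eC heCsurj heCker hP,
    AuxFrag.map_prime_of_nilker eC heCsurj heCker hQ, ?_, ?_, ?_⟩
  · intro hcon
    apply hPQ
    have := congrArg (Ideal.comap eC) hcon
    rwa [AuxFrag.comap_map_of_nilker eC heCsurj heCker hP,
      AuxFrag.comap_map_of_nilker eC heCsurj heCker hQ] at this
  · apply Ideal.comap_injective_of_surjective eS heSsurj
    rw [hcomp, AuxFrag.comap_map_of_nilker eC heCsurj heCker hP, hPp,
      AuxFrag.comap_map_of_nilker eS heSsurj heSker hp.1.1]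
  · apply Ideal.comap_injective_of_surjective eS heSsurj
    rw [hcomp, AuxFrag.comap_map_of_nilker eC heCsurj heCker hQ, hQp,
      AuxFrag.comap_map_of_nilker eS heSsurj heSker hp.1.1]

include hf hker in
lemma AuxFrag.AF_of_map_surj (hkS : ∀ x ∈ RingHom.ker f, x ∈ S)
    (h : ApparentlyFragile (S.map f)) : ApparentlyFragile S := by
  intro C hSC hne
  set C' : Subring R' := C.map f with hC'
  have hSC' : S.map f ≤ C' := fun y => by rintro ⟨x, hx, rfl⟩; exact ⟨x, hSC hx, rfl⟩
  have hne' : S.map f ≠ C' := by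
    intro hcon
    apply hne
    apply le_antisymm hSC
    intro c hc
    have : f c ∈ S.map f := hcon ▸ ⟨c, hc, rfl⟩
    obtain ⟨s, hs, hfs⟩ := this
    have hker_mem : c - s ∈ RingHom.ker f := by
      simp [RingHom.mem_ker, map_sub, hfs]
    have : c - s ∈ S := hkS _ hker_mem
    have := S.add_mem hs this
    simpa using this
  obtain ⟨p', hp', P', Q', hP', hQ', hPQ', hPp', hQp'⟩ := h C' hSC' hne'
  set eS : S →+* S.map f := AuxFrag.subMap f S _ (fun x hx => ⟨x, hx, rfl⟩) with heS
  set eC : C →+* C' := AuxFrag.subMap f C C' (fun x hx => ⟨x, hx, rfl⟩) with heC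
  have heSsurj : Function.Surjective eS :=
    AuxFrag.subMap_surjective _ _ _ _ (by rintro y ⟨x, hx, rfl⟩; exact ⟨x, hx, rfl⟩)
  have heCsurj : Function.Surjective eC :=
    AuxFrag.subMap_surjective _ _ _ _ (by rintro y ⟨x, hx, rfl⟩; exact ⟨x, hx, rfl⟩)
  have heSker : ∀ x ∈ RingHom.ker eS, IsNilpotent x := by
    intro x hx
    have hx' : f (x : R) = 0 := congrArg Subtype.val hx
    exact AuxFrag.isNilpotent_subtype (hker _ (by simpa [RingHom.mem_ker] using hx'))
  have heCker : ∀ x ∈ RingHom.ker eC, IsNilpotent x := by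
    intro x hx
    have hx' : f (x : R) = 0 := congrArg Subtype.val hx
    exact AuxFrag.isNilpotent_subtype (hker _ (by simpa [RingHom.mem_ker] using hx'))
  have hsq : (Subring.inclusion hSC').comp eS = eC.comp (Subring.inclusion hSC) :=
    RingHom.ext fun s => Subtype.ext rfl
  have hcomp : ∀ X : Ideal C',
      (X.comap (Subring.inclusion hSC')).comap eS
        = (X.comap eC).comap (Subring.inclusion hSC) := by
    intro X
    rw [Ideal.comap_comap, Ideal.comap_comap, hsq]
  refine ⟨p'.comap eS, AuxFrag.mem_minimalPrimes_comap eS heSsurj heSker hp',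
    P'.comap eC, Q'.comap eC, P'.comap_isPrime eC, Q'.comap_isPrime eC, ?_, ?_, ?_⟩
  · intro hcon
    apply hPQ'
    have := congrArg (Ideal.map eC) hcon
    rwa [Ideal.map_comap_of_surjective eC heCsurj, Ideal.map_comap_of_surjective eC heCsurj]
      at this
  · rw [← hcomp, hPp']
  · rw [← hcomp, hQp']

end Transfer

section Iffs
variable {R R' : Type*} [CommRing R] [CommRing R']

lemma AuxFrag.AF_quot_iff (S : Subring R) (hS : (nilradical R : Set R) ⊆ S) :
    ApparentlyFragile S ↔ ApparentlyFragile (S.map (Ideal.Quotient.mk (nilradical R))) := by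
  have hker : ∀ x ∈ RingHom.ker (Ideal.Quotient.mk (nilradical R)), IsNilpotent x := by
    intro x hx
    rw [Ideal.mk_ker] at hx
    exact mem_nilradical.mp hx
  constructor
  · exact AuxFrag.AF_map_of_surj _ Ideal.Quotient.mk_surjective hker S
  · refine AuxFrag.AF_of_map_surj _ Ideal.Quotient.mk_surjective hker S ?_
    intro x hx
    rw [Ideal.mk_ker] at hx
    exact hS hx

lemma AuxFrag.AF_map_equiv_iff (e : R ≃+* R') (S : Subring R) :
    ApparentlyFragile S ↔ ApparentlyFragile (S.map (e : R →+* R')) := by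
  have hker : ∀ x ∈ RingHom.ker (e : R →+* R'), IsNilpotent x := by
    intro x hx
    have hx' : e x = 0 := RingHom.mem_ker.mp hx
    have : x = 0 := by
      apply e.injective
      simpa using hx'
    exact this ▸ IsNilpotent.zero
  constructor
  · exact AuxFrag.AF_map_of_surj _ e.surjective hker S
  · refine AuxFrag.AF_of_map_surj _ e.surjective hker S ?_
    intro x hx
    have hx' : e x = 0 := RingHom.mem_ker.mp hx
    have : x = 0 := by
      apply e.injective
      simpa using hx'
    exact this ▸ S.zero_mem

end Iffs

section LocLemmas
variable {T T' : Type*} [CommRing T] [CommRing T']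

lemma AuxFrag.lift_loc_mk (f : T →+* T') (V : Submonoid T) (V' : Submonoid T')
    (hg : ∀ y : V, IsUnit (((algebraMap T' (Localization V')).comp f) y))
    (b : T) (v : V) (hv' : f v ∈ V') :
    IsLocalization.lift (M := V) (S := Localization V) hg (Localization.mk b v) =
      Localization.mk (f b) ⟨f v, hv'⟩ := by
  rw [Localization.mk_eq_mk', Localization.mk_eq_mk', IsLocalization.lift_mk'_spec]
  simp only [RingHom.comp_apply]
  rw [mul_comm]
  exact (IsLocalization.mk'_spec _ _ _).symm

lemma AuxFrag.mk_eq_zero_iff (V : Submonoid T) (b : T) (v : V) :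
    Localization.mk b v = 0 ↔ ∃ u : V, (u : T) * b = 0 := by
  rw [Localization.mk_eq_mk', IsLocalization.mk'_eq_zero_iff]

lemma AuxFrag.loc_reduced [IsReduced T] (V : Submonoid T) (x : Localization V)
    (hx : IsNilpotent x) : x = 0 := by
  obtain ⟨n, hn⟩ := hx
  induction x using Localization.ind with
  | _ p =>
  obtain ⟨b, v⟩ := p
  simp only at hn ⊢
  cases n with
  | zero =>
    have h10 : (1 : Localization V) = 0 := by simpa using hn
    rw [← mul_one (Localization.mk b v), h10, mul_zero]
  | succ m =>
    rw [Localization.mk_pow, AuxFrag.mk_eq_zero_iff] at hn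
    obtain ⟨u, hu⟩ := hn
    have hpow : ((u : T) * b) ^ (m + 1) = (u : T) ^ m * ((u : T) * b ^ (m + 1)) := by ring
    have hnil : IsNilpotent ((u : T) * b) := ⟨m + 1, by rw [hpow, hu, mul_zero]⟩
    have hub : (u : T) * b = 0 := hnil.eq_zero
    have hx' : Localization.mk b v =
        Localization.mk ((u : T) * b) ⟨(u : T) * (v : T), mul_mem u.2 v.2⟩ := by
      rw [Localization.mk_eq_mk_iff, Localization.r_iff_exists]
      exact ⟨1, by push_cast; ring⟩
    rw [hx', hub, Localization.mk_zero]

end LocLemmas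

section LocSub
variable {B : Type*} [CommRing B] (A : Subring B) (W : Submonoid A)

lemma AuxFrag.mem_map_subtype (w : W) : ((w : A) : B) ∈ W.map A.subtype :=
  Submonoid.mem_map.mpr ⟨w, w.2, rfl⟩

lemma AuxFrag.locMap_mk (a : A) (w : W) :
    locMap A W (Localization.mk a w) =
      Localization.mk (a : B) ⟨((w : A) : B), AuxFrag.mem_map_subtype A W w⟩ :=
  AuxFrag.lift_loc_mk A.subtype W (W.map A.subtype) _ a w (AuxFrag.mem_map_subtype A W w)

lemma AuxFrag.mem_locMap_range (y : Localization (W.map A.subtype)) :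
    y ∈ (locMap A W).range ↔
      ∃ (a : A) (w : W),
        Localization.mk (a : B) ⟨((w : A) : B), AuxFrag.mem_map_subtype A W w⟩ = y := by
  constructor
  · rintro ⟨x, rfl⟩
    induction x using Localization.ind with
    | _ p => exact ⟨p.1, p.2, (AuxFrag.locMap_mk A W p.1 p.2).symm⟩
  · rintro ⟨a, w, rfl⟩
    exact ⟨Localization.mk a w, AuxFrag.locMap_mk A W a w⟩

lemma AuxFrag.nilradical_loc_subset (hJ : (nilradical B : Set B) ⊆ A) :
    (nilradical (Localization (W.map A.subtype)) : Set (Localization (W.map A.subtype)))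
      ⊆ ((locMap A W).range : Set (Localization (W.map A.subtype))) := by
  intro x hx
  obtain ⟨n, hxn⟩ := mem_nilradical.mp hx
  induction x using Localization.ind with
  | _ p =>
  obtain ⟨b, v⟩ := p
  simp only at hxn ⊢
  cases n with
  | zero =>
    have h10 : (1 : Localization (W.map A.subtype)) = 0 := by simpa using hxn
    have hz : Localization.mk b v = 0 := by
      rw [← mul_one (Localization.mk b v), h10, mul_zero]
    rw [hz]
    exact ⟨0, map_zero _⟩
  | succ m =>
    rw [Localization.mk_pow, AuxFrag.mk_eq_zero_iff] at hxn
    obtain ⟨u, hu⟩ := hxn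
    have hnilc : ((u : B) * b) ∈ nilradical B := by
      refine mem_nilradical.mpr ⟨m + 1, ?_⟩
      have : ((u : B) * b) ^ (m + 1) = (u : B) ^ m * ((u : B) * b ^ (m + 1)) := by ring
      rw [this, hu, mul_zero]
    have hcA : ((u : B) * b) ∈ A := hJ hnilc
    obtain ⟨w₁, hw₁W, hw₁⟩ := Submonoid.mem_map.mp u.2
    obtain ⟨w₂, hw₂W, hw₂⟩ := Submonoid.mem_map.mp v.2
    have hmemuv : (u : B) * (v : B) ∈ W.map A.subtype :=
      Submonoid.mul_mem _ u.2 v.2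
    have hxcu : Localization.mk b v
        = Localization.mk ((u : B) * b) ⟨(u : B) * (v : B), hmemuv⟩ := by
      rw [Localization.mk_eq_mk_iff, Localization.r_iff_exists]
      exact ⟨1, by push_cast; ring⟩
    rw [hxcu]
    refine (AuxFrag.mem_locMap_range A W _).mpr
      ⟨⟨(u : B) * b, hcA⟩, ⟨w₁ * w₂, Submonoid.mul_mem _ hw₁W hw₂W⟩, ?_⟩
    congr 1
    exact Subtype.ext (by push_cast [← hw₁, ← hw₂]; rfl)

end LocSub

section QuotSetup
variable {B : Type*} [CommRing B] (A : Subring B)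

/-- The induced map from a subring to its image in the quotient by the nilradical. -/
noncomputable def AuxFrag.sigMap : A →+* (A.map (Ideal.Quotient.mk (nilradical B))) :=
  AuxFrag.subMap (Ideal.Quotient.mk (nilradical B)) A _ (fun x hx => ⟨x, hx, rfl⟩)

lemma AuxFrag.sigMap_surjective : Function.Surjective (AuxFrag.sigMap A) :=
  AuxFrag.subMap_surjective _ _ _ _ (by rintro y ⟨x, hx, rfl⟩; exact ⟨x, hx, rfl⟩)

lemma AuxFrag.sigMap_nilker : ∀ x ∈ RingHom.ker (AuxFrag.sigMap A), IsNilpotent x := by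
  intro x hx
  have hx' : Ideal.Quotient.mk (nilradical B) (x : B) = 0 := congrArg Subtype.val hx
  have : (x : B) ∈ nilradical B := (Ideal.Quotient.eq_zero_iff_mem).mp hx'
  exact AuxFrag.isNilpotent_subtype (mem_nilradical.mp this)

variable (W : Submonoid A)

lemma AuxFrag.pi_mem_Vbar : ∀ v ∈ W.map A.subtype,
    Ideal.Quotient.mk (nilradical B) v ∈
      (W.map (AuxFrag.sigMap A)).map (A.map (Ideal.Quotient.mk (nilradical B))).subtype := by
  rintro - ⟨w, hw, rfl⟩
  exact Submonoid.mem_map.mpr ⟨AuxFrag.sigMap A w, Submonoid.mem_map.mpr ⟨w, hw, rfl⟩, rfl⟩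

/-- The induced map between the localization of the ambient ring and that of its
quotient by the nilradical. -/
noncomputable def AuxFrag.phiMap :
    Localization (W.map A.subtype) →+*
      Localization ((W.map (AuxFrag.sigMap A)).map
        (A.map (Ideal.Quotient.mk (nilradical B))).subtype) :=
  IsLocalization.lift (M := W.map A.subtype) (S := Localization (W.map A.subtype))
    (g := (algebraMap _ (Localization ((W.map (AuxFrag.sigMap A)).map
        (A.map (Ideal.Quotient.mk (nilradical B))).subtype))).comp
        (Ideal.Quotient.mk (nilradical B)))
    (fun y => IsLocalization.map_units _
      ⟨Ideal.Quotient.mk (nilradical B) (y : B), AuxFrag.pi_mem_Vbar A W _ y.2⟩)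

lemma AuxFrag.phiMap_mk (b : B) (v : W.map A.subtype) :
    AuxFrag.phiMap A W (Localization.mk b v) =
      Localization.mk (Ideal.Quotient.mk (nilradical B) b)
        ⟨Ideal.Quotient.mk (nilradical B) (v : B), AuxFrag.pi_mem_Vbar A W _ v.2⟩ :=
  AuxFrag.lift_loc_mk (Ideal.Quotient.mk (nilradical B)) _ _ _ b v _

lemma AuxFrag.phiMap_surjective : Function.Surjective (AuxFrag.phiMap A W) := by
  intro y
  induction y using Localization.ind with
  | _ p =>
  obtain ⟨bbar, vbar⟩ := p
  simp only
  obtain ⟨b, rfl⟩ := Ideal.Quotient.mk_surjective bbar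
  obtain ⟨wbar, hwbar, hwv⟩ := Submonoid.mem_map.mp vbar.2
  obtain ⟨w, hwW, rfl⟩ := Submonoid.mem_map.mp hwbar
  refine ⟨Localization.mk b ⟨(w : B), Submonoid.mem_map.mpr ⟨w, hwW, rfl⟩⟩, ?_⟩
  rw [AuxFrag.phiMap_mk]
  congr 1
  exact Subtype.ext hwv

lemma AuxFrag.isReduced_quot : IsReduced (B ⧸ nilradical B) :=
  (Ideal.isRadical_iff_quotient_reduced _).mp (Ideal.radical_isRadical (0 : Ideal B))

lemma AuxFrag.ker_phiMap :
    RingHom.ker (AuxFrag.phiMap A W) = nilradical (Localization (W.map A.subtype)) := by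
  haveI := AuxFrag.isReduced_quot (B := B)
  ext x
  constructor
  · intro hx
    have hx' : AuxFrag.phiMap A W x = 0 := RingHom.mem_ker.mp hx
    clear hx
    induction x using Localization.ind with
    | _ p =>
    obtain ⟨b, v⟩ := p
    simp only at hx' ⊢
    rw [AuxFrag.phiMap_mk, AuxFrag.mk_eq_zero_iff] at hx'
    obtain ⟨m, hm⟩ := hx'
    obtain ⟨wbar, hwbar, hwv⟩ := Submonoid.mem_map.mp m.2
    obtain ⟨w, hwW, rfl⟩ := Submonoid.mem_map.mp hwbar
    have hpi : Ideal.Quotient.mk (nilradical B) ((w : B) * b) = 0 := by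
      rw [map_mul]
      have : ((AuxFrag.sigMap A w : (A.map (Ideal.Quotient.mk (nilradical B)))) :
          B ⧸ nilradical B) = (m : B ⧸ nilradical B) := hwv
      rw [show (Ideal.Quotient.mk (nilradical B)) (w : B) = (m : B ⧸ nilradical B) from this]
      exact hm
    have hnil : (w : B) * b ∈ nilradical B := Ideal.Quotient.eq_zero_iff_mem.mp hpi
    obtain ⟨n, hn⟩ := mem_nilradical.mp hnil
    refine mem_nilradical.mpr ⟨n, ?_⟩
    rw [Localization.mk_pow, AuxFrag.mk_eq_zero_iff]
    refine ⟨⟨(w : B), Submonoid.mem_map.mpr ⟨w, hwW, rfl⟩⟩ ^ n, ?_⟩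
    have : ((⟨(w : B), Submonoid.mem_map.mpr ⟨w, hwW, rfl⟩⟩ ^ n :
        W.map A.subtype) : B) = (w : B) ^ n := by
      push_cast; rfl
    rw [this, ← mul_pow, hn]
  · intro hx
    obtain ⟨n, hn⟩ := mem_nilradical.mp hx
    have : IsNilpotent (AuxFrag.phiMap A W x) := ⟨n, by rw [← map_pow, hn, map_zero]⟩
    exact RingHom.mem_ker.mpr (AuxFrag.loc_reduced _ _ this)

lemma AuxFrag.AF_loc_iff (hJ : (nilradical B : Set B) ⊆ A) :
    ApparentlyFragile (locMap A W).range ↔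
      ApparentlyFragile (locMap (A.map (Ideal.Quotient.mk (nilradical B)))
        (W.map (AuxFrag.sigMap A))).range := by
  set L := Localization (W.map A.subtype) with hL
  have hnil : (nilradical L : Set L) ⊆ ((locMap A W).range : Set L) :=
    AuxFrag.nilradical_loc_subset A W hJ
  rw [AuxFrag.AF_quot_iff _ hnil]
  have hkerphi : nilradical L = RingHom.ker (AuxFrag.phiMap A W) :=
    (AuxFrag.ker_phiMap A W).symm
  set eqv := (Ideal.quotEquivOfEq hkerphi).trans
    (RingHom.quotientKerEquivOfSurjective (AuxFrag.phiMap_surjective A W)) with heqv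
  rw [AuxFrag.AF_map_equiv_iff eqv]
  have heqv_mk : ∀ x : L, (eqv : (L ⧸ nilradical L) →+* _) (Ideal.Quotient.mk (nilradical L) x)
      = AuxFrag.phiMap A W x := by
    intro x
    show eqv (Ideal.Quotient.mk (nilradical L) x) = AuxFrag.phiMap A W x
    rw [heqv]
    simp only [RingEquiv.trans_apply, Ideal.quotEquivOfEq_mk]
    exact RingHom.kerLift_mk (AuxFrag.phiMap A W) x
  have hsub : (((locMap A W).range.map (Ideal.Quotient.mk (nilradical L))).map
      (eqv : (L ⧸ nilradical L) →+* _)) = (locMap (A.map (Ideal.Quotient.mk (nilradical B)))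
        (W.map (AuxFrag.sigMap A))).range := by
    ext y
    constructor
    · rintro ⟨z, ⟨x, hx, rfl⟩, rfl⟩
      rw [heqv_mk]
      obtain ⟨a, w, rfl⟩ := (AuxFrag.mem_locMap_range A W x).mp hx
      rw [AuxFrag.phiMap_mk]
      refine (AuxFrag.mem_locMap_range _ _ _).mpr
        ⟨AuxFrag.sigMap A a, ⟨AuxFrag.sigMap A w, Submonoid.mem_map.mpr ⟨w, w.2, rfl⟩⟩, ?_⟩
      congr 1
    · intro hy
      obtain ⟨abar, wbar, rfl⟩ := (AuxFrag.mem_locMap_range _ _ y).mp hy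
      obtain ⟨a, rfl⟩ := AuxFrag.sigMap_surjective A abar
      obtain ⟨w, hwW, hww⟩ := Submonoid.mem_map.mp wbar.2
      refine ⟨Ideal.Quotient.mk (nilradical L)
        (Localization.mk (a : B) ⟨(w : B), Submonoid.mem_map.mpr ⟨w, hwW, rfl⟩⟩),
        ⟨_, (AuxFrag.mem_locMap_range A W _).mpr ⟨a, ⟨w, hwW⟩, rfl⟩, rfl⟩, ?_⟩
      rw [heqv_mk, AuxFrag.phiMap_mk]
      congr 1
      have hvv : ((AuxFrag.sigMap A w : A.map (Ideal.Quotient.mk (nilradical B))) :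
          B ⧸ nilradical B) = ((wbar : A.map (Ideal.Quotient.mk (nilradical B))) :
          B ⧸ nilradical B) := congrArg Subtype.val hww
      exact Subtype.ext hvv
  rw [hsub]

end QuotSetup

section FragileHelpers
variable {B : Type*} [CommRing B] (A : Subring B)

lemma AuxFrag.J_subset_of_fragile (h : Fragile A) : (nilradical B : Set B) ⊆ A := by
  intro x hxnil
  let I : Ideal A :=
    { carrier := {a : A | (a : B) * x ∈ A}
      add_mem' := fun {a b} ha hb => by
        show ((a + b : A) : B) * x ∈ A
        push_cast
        rw [add_mul]
        exact A.add_mem ha hb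
      zero_mem' := by
        show ((0 : A) : B) * x ∈ A
        push_cast
        rw [zero_mul]
        exact A.zero_mem
      smul_mem' := fun c a ha => by
        show ((c • a : A) : B) * x ∈ A
        have : ((c • a : A) : B) * x = (c : B) * ((a : B) * x) := by
          rw [smul_eq_mul]; push_cast; ring
        rw [this]
        exact A.mul_mem c.2 ha }
  have hI : I = ⊤ := by
    by_contra hne
    obtain ⟨M, hM, hIM⟩ := Ideal.exists_le_maximal I hne
    haveI := hM
    have hAF := h M hM.isPrime
    have hnilL : algebraMap B (Localization (M.primeCompl.map A.subtype)) x ∈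
        nilradical (Localization (M.primeCompl.map A.subtype)) :=
      mem_nilradical.mpr (IsNilpotent.map (mem_nilradical.mp hxnil) _)
    have hmem := AuxFrag.AF_nilradical_subset _ hAF hnilL
    obtain ⟨a, w, hmk⟩ := (AuxFrag.mem_locMap_range A M.primeCompl _).mp hmem
    have halg : algebraMap B (Localization (M.primeCompl.map A.subtype)) x
        = Localization.mk x 1 := by
      rw [Localization.mk_eq_mk', IsLocalization.mk'_one]
    rw [halg] at hmk
    rw [Localization.mk_eq_mk_iff, Localization.r_iff_exists] at hmk
    obtain ⟨t, ht⟩ := hmk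
    simp only [OneMemClass.coe_one, one_mul] at ht
    obtain ⟨t₁, ht₁M, ht₁⟩ := Submonoid.mem_map.mp t.2
    have hts : (t₁ : B) = (t : B) := ht₁
    have hIc : (t₁ * (w : A)) ∈ I := by
      show ((t₁ * (w : A) : A) : B) * x ∈ A
      have hval : ((t₁ * (w : A) : A) : B) * x = (t : B) * (((w : A) : B) * x) := by
        push_cast [← hts]
        ring
      rw [hval, ← ht, ← hts]
      exact A.mul_mem t₁.2 a.2
    have hmmem : t₁ * (w : A) ∈ M := hIM hIc
    exact Submonoid.mul_mem _ ht₁M w.2 hmmem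
  have h1 : (1 : A) ∈ I := hI ▸ Submodule.mem_top
  have hfin : ((1 : A) : B) * x ∈ A := h1
  simpa using hfin

lemma AuxFrag.primeCompl_map_comap {Pbar : Ideal (A.map (Ideal.Quotient.mk (nilradical B)))}
    (hPbar : Pbar.IsPrime) :
    haveI := hPbar
    haveI : (Pbar.comap (AuxFrag.sigMap A)).IsPrime := Pbar.comap_isPrime _
    (Pbar.comap (AuxFrag.sigMap A)).primeCompl.map (AuxFrag.sigMap A) = Pbar.primeCompl := by
  haveI := hPbar
  haveI : (Pbar.comap (AuxFrag.sigMap A)).IsPrime := Pbar.comap_isPrime _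
  ext ybar
  simp only [Submonoid.mem_map]
  constructor
  · rintro ⟨a, ha, rfl⟩
    exact ha
  · intro hy
    obtain ⟨a, rfl⟩ := AuxFrag.sigMap_surjective A ybar
    exact ⟨a, hy, rfl⟩

lemma AuxFrag.primeCompl_comap_map {P : Ideal A} (hP : P.IsPrime) :
    haveI := hP
    haveI : (P.map (AuxFrag.sigMap A)).IsPrime :=
      AuxFrag.map_prime_of_nilker _ (AuxFrag.sigMap_surjective A) (AuxFrag.sigMap_nilker A) hP
    P.primeCompl.map (AuxFrag.sigMap A) = (P.map (AuxFrag.sigMap A)).primeCompl := by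
  haveI := hP
  haveI : (P.map (AuxFrag.sigMap A)).IsPrime :=
    AuxFrag.map_prime_of_nilker _ (AuxFrag.sigMap_surjective A) (AuxFrag.sigMap_nilker A) hP
  have hcm : (P.map (AuxFrag.sigMap A)).comap (AuxFrag.sigMap A) = P :=
    AuxFrag.comap_map_of_nilker _ (AuxFrag.sigMap_surjective A) (AuxFrag.sigMap_nilker A) hP
  ext ybar
  simp only [Submonoid.mem_map]
  constructor
  · rintro ⟨a, ha, rfl⟩
    intro hmemP
    have hmem2 : a ∈ (P.map (AuxFrag.sigMap A)).comap (AuxFrag.sigMap A) :=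
      Ideal.mem_comap.mpr hmemP
    rw [hcm] at hmem2
    exact ha hmem2
  · intro hy
    obtain ⟨a, rfl⟩ := AuxFrag.sigMap_surjective A ybar
    exact ⟨a, fun haP => hy (Ideal.mem_map_of_mem _ haP), rfl⟩

end FragileHelpers

end AuxFragHelpers

/-- Let `A ⊆ B` be an integral extension and `J` the nilradical of `B`.
Then `A ⊆ B` is apparently fragile (resp. fragile, resp. globally fragile) iff `J ⊆ A`
(so that `J` is the nilradical of both `A` and `B`) and the induced extension
`A/J ⊆ B/J` is apparently fragile (resp. fragile, resp. globally fragile). -/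
theorem fragilities_iff_quotient_nilradical {B : Type*} [CommRing B] (A : Subring B)
    (hint : Algebra.IsIntegral A B) :
    (ApparentlyFragile A ↔
      ((nilradical B : Set B) ⊆ A ∧
        ApparentlyFragile (A.map (Ideal.Quotient.mk (nilradical B))))) ∧
    (Fragile A ↔
      ((nilradical B : Set B) ⊆ A ∧
        Fragile (A.map (Ideal.Quotient.mk (nilradical B))))) ∧
    (GloballyFragile A ↔
      ((nilradical B : Set B) ⊆ A ∧
        GloballyFragile (A.map (Ideal.Quotient.mk (nilradical B))))) := by
  refine ⟨?_, ?_, ?_⟩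
  · constructor
    · intro h
      have hJ := AuxFrag.AF_nilradical_subset A h
      exact ⟨hJ, (AuxFrag.AF_quot_iff A hJ).mp h⟩
    · rintro ⟨hJ, h⟩
      exact (AuxFrag.AF_quot_iff A hJ).mpr h
  · constructor
    · intro h
      have hJ := AuxFrag.J_subset_of_fragile A h
      refine ⟨hJ, ?_⟩
      intro Pbar hPbar
      haveI := hPbar
      haveI hP : (Pbar.comap (AuxFrag.sigMap A)).IsPrime := Pbar.comap_isPrime _
      have h1 := h (Pbar.comap (AuxFrag.sigMap A)) hP
      have h2 := (AuxFrag.AF_loc_iff A (Pbar.comap (AuxFrag.sigMap A)).primeCompl hJ).mp h1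
      rwa [AuxFrag.primeCompl_map_comap A hPbar] at h2
    · rintro ⟨hJ, h⟩
      intro P hP
      haveI := hP
      haveI hPbar : (P.map (AuxFrag.sigMap A)).IsPrime :=
        AuxFrag.map_prime_of_nilker _ (AuxFrag.sigMap_surjective A) (AuxFrag.sigMap_nilker A) hP
      have h2 := h (P.map (AuxFrag.sigMap A)) hPbar
      rw [← AuxFrag.primeCompl_comap_map A hP] at h2
      exact (AuxFrag.AF_loc_iff A P.primeCompl hJ).mpr h2
  · constructor
    · intro h
      have hFr : Fragile A := fun P hP => h P.primeCompl
      have hJ := AuxFrag.J_subset_of_fragile A hFr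
      refine ⟨hJ, ?_⟩
      intro Wbar
      have hW : (Wbar.comap (AuxFrag.sigMap A)).map (AuxFrag.sigMap A) = Wbar := by
        ext y
        simp only [Submonoid.mem_map, Submonoid.mem_comap]
        constructor
        · rintro ⟨a, ha, rfl⟩; exact ha
        · intro hy
          obtain ⟨a, rfl⟩ := AuxFrag.sigMap_surjective A y
          exact ⟨a, hy, rfl⟩
      have h2 := (AuxFrag.AF_loc_iff A (Wbar.comap (AuxFrag.sigMap A)) hJ).mp
        (h (Wbar.comap (AuxFrag.sigMap A)))
      rwa [hW] at h2
    · rintro ⟨hJ, h⟩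
      intro W
      exact (AuxFrag.AF_loc_iff A W hJ).mpr (h (W.map (AuxFrag.sigMap A)))
end

section
/- Let A be a zero-dimensional commutative ring with only finitely many minimal primes, and let B be an integral extension ring of A. Then the extension A ⊆ B is fragile if and only if it is apparently fragile, if and only if it is globally fragile. -/
open scoped Classical



/-- In a zero-dimensional ring, every element is π-regular. -/
lemma pi_regular {R : Type*} [CommRing R]
    (hdim : ∀ P : Ideal R, P.IsPrime → P.IsMaximal) (a : R) :
    ∃ n : ℕ, 0 < n ∧ ∃ c : R, a ^ n = a ^ (n + 1) * c := by
  -- the multiplicative set {a^n (1 + a x)}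
  set M : Submonoid R :=
    { carrier := {y | ∃ (n : ℕ) (x : R), y = a ^ n * (1 + a * x)}
      one_mem' := ⟨0, 0, by ring⟩
      mul_mem' := by
        rintro y z ⟨n, x, rfl⟩ ⟨m, w, rfl⟩
        exact ⟨n + m, x + w + a * x * w, by ring⟩ } with hM
  by_cases h0 : (0 : R) ∈ M
  · obtain ⟨n, x, hx⟩ := h0
    have key : a ^ (n+1) = a ^ (n+2) * (-x) := by
      have : a ^ (n+1) * (1 + a * x) = 0 := by
        calc a ^ (n+1) * (1 + a * x) = a * (a ^ n * (1 + a * x)) := by ring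
        _ = 0 := by rw [← hx]; ring
      have : a ^ (n+1) + a ^ (n+2) * x = 0 := by linear_combination this
      linear_combination this
    exact ⟨n + 1, Nat.succ_pos n, -x, key⟩
  · exfalso
    -- localization at M is nontrivial
    have : Nontrivial (Localization M) := by
      refine ⟨0, 1, fun h => ?_⟩
      have := (IsLocalization.map_eq_zero_iff M (Localization M) 1).mp (by rw [map_one]; exact h.symm)
      obtain ⟨m, hm⟩ := this
      exact h0 (by rw [mul_one] at hm; rw [← hm]; exact m.2)
    obtain ⟨𝔪, h𝔪⟩ := Ideal.exists_maximal (Localization M)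
    have hP : (𝔪.comap (algebraMap R (Localization M))).IsPrime ∧
        Disjoint (M : Set R) ((𝔪.comap (algebraMap R (Localization M))) : Set R) :=
      (IsLocalization.isPrime_iff_isPrime_disjoint M (Localization M) 𝔪).mp h𝔪.isPrime
    set P := 𝔪.comap (algebraMap R (Localization M)) with hPdef
    have haP : a ∉ P := fun ha =>
      Set.disjoint_left.mp hP.2 (⟨1, 0, by ring⟩ : a ∈ M) ha
    obtain ⟨x, i, hi, hxi⟩ := (hdim P hP.1).exists_inv haP
    -- 1 - a * x ∈ P and 1 - a*x = 1 + a*(-x) ∈ M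
    have h1 : 1 - x * a ∈ P := by
      have h : 1 - x * a = i := by linear_combination -hxi
      rw [h]; exact hi
    exact Set.disjoint_left.mp hP.2 (⟨0, -x, by ring⟩ : (1 - x*a) ∈ M) h1

lemma exists_idem_of_pi {R : Type*} [CommRing R]
    (hdim : ∀ P : Ideal R, P.IsPrime → P.IsMaximal) (a : R) :
    ∃ (e : R) (n : ℕ), 0 < n ∧ e * e = e ∧ a ^ n * (1 - e) = 0 ∧ ∃ d : R, e = a ^ n * d := by
  obtain ⟨n, hn, c, hc⟩ := pi_regular hdim a
  -- a^n = a^(n+k) * c^k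
  have key : ∀ k : ℕ, a ^ n = a ^ (n + k) * c ^ k := by
    intro k; induction k with
    | zero => simp
    | succ k ih =>
      calc a ^ n = a ^ (n+1) * c := hc
      _ = a * c * a ^ n := by ring
      _ = a * c * (a ^ (n+k) * c ^ k) := by rw [← ih]
      _ = a ^ (n + (k+1)) * c ^ (k+1) := by ring
  have h2 : a ^ n * a ^ n * c ^ n = a ^ n := by
    have := key n; rw [pow_add] at this; linear_combination -this
  refine ⟨a ^ n * c ^ n, n, hn, ?_, ?_, c ^ n, rfl⟩
  · linear_combination (c ^ n) * h2
  · linear_combination -h2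

lemma prime_mem_minimalPrimes {R : Type*} [CommRing R]
    (hdim : ∀ P : Ideal R, P.IsPrime → P.IsMaximal) (q : Ideal R) (hq : q.IsPrime) :
    q ∈ minimalPrimes R := by
  obtain ⟨p, hp, hpq⟩ := Ideal.exists_minimalPrimes_le (I := ⊥) (J := q) bot_le
  have hpP : p.IsPrime := hp.1.1
  have : p = q := ((hdim p hpP).eq_of_le hq.ne_top hpq).symm ▸ rfl
  · rwa [← this]

lemma exists_good_idem {R : Type*} [CommRing R]
    (hdim : ∀ P : Ideal R, P.IsPrime → P.IsMaximal)
    (hfin : (minimalPrimes R).Finite) (W : Submonoid R) :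
    ∃ e : R, e * e = e ∧ (∃ w ∈ W, w * (1 - e) = 0) ∧
      ∀ v ∈ W, ∃ u : R, u * v * e = e := by
  -- choose an element of W in each prime meeting W
  have hsel : ∀ q : Ideal R, ∃ g : R, g ∈ W ∧ ((∃ v ∈ W, v ∈ q) → g ∈ q) := by
    intro q
    by_cases h : ∃ v ∈ W, v ∈ q
    · obtain ⟨v, hv, hvq⟩ := h; exact ⟨v, hv, fun _ => hvq⟩
    · exact ⟨1, W.one_mem, fun h' => absurd h' h⟩
  choose g hgW hgq using hsel
  set F := hfin.toFinset with hF
  set a : R := ∏ q ∈ F, g q with ha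
  have haW : a ∈ W := Submonoid.prod_mem W (fun q _ => hgW q)
  have haq : ∀ q : Ideal R, q.IsPrime → (∃ v ∈ W, v ∈ q) → a ∈ q := by
    intro q hq hmeet
    have hqF : q ∈ F := by rw [hF, Set.Finite.mem_toFinset]; exact prime_mem_minimalPrimes hdim q hq
    rw [ha, ← Finset.prod_erase_mul F g hqF]
    exact Ideal.mul_mem_left _ _ (hgq q hmeet)
  obtain ⟨e, n, hn, he, hkill, d, hd⟩ := exists_idem_of_pi hdim a
  refine ⟨e, he, ⟨a ^ n, pow_mem haW n, hkill⟩, ?_⟩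
  intro v hv
  -- span {v} ⊔ span {1 - e} = ⊤
  have htop : Ideal.span {v} ⊔ Ideal.span {1 - e} = ⊤ := by
    by_contra hne
    obtain ⟨m, hm, hle⟩ := Ideal.exists_le_maximal _ hne
    have hvm : v ∈ m := hle (Ideal.mem_sup_left (Ideal.subset_span rfl))
    have h1em : 1 - e ∈ m := hle (Ideal.mem_sup_right (Ideal.subset_span rfl))
    have ham : a ∈ m := haq m hm.isPrime ⟨v, hv, hvm⟩
    have hem : e ∈ m := by rw [hd]; exact Ideal.mul_mem_right _ _ (Ideal.pow_mem_of_mem m ham n hn)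
    exact hm.ne_top (Ideal.eq_top_of_isUnit_mem m (by
      have : (1 : R) ∈ m := by have := m.add_mem hem h1em; simpa using this
      exact this) isUnit_one |> fun h => h)
  have h1 : (1 : R) ∈ Ideal.span {v} ⊔ Ideal.span {1 - e} := htop ▸ Submodule.mem_top
  obtain ⟨x, hx, y, hy, hxy⟩ := Submodule.mem_sup.mp h1
  obtain ⟨u, rfl⟩ := Ideal.mem_span_singleton'.mp hx
  obtain ⟨z, rfl⟩ := Ideal.mem_span_singleton'.mp hy
  exact ⟨u, by linear_combination e * hxy + z * he⟩
section Loc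
variable {B : Type*} [CommRing B] (A : Subring B) (W : Submonoid A)

lemma locMap_algebraMap (a : A) :
    locMap A W (algebraMap A (Localization W) a) = algebraMap B (Localization (W.map A.subtype)) (a : B) :=
  IsLocalization.lift_eq _ a

variable {e : A} (he : e * e = e) (hw : ∃ w ∈ W, w * (1 - e) = 0)
  (hP3 : ∀ v ∈ W, ∃ u : A, u * v * e = e)

include hw in
lemma phi_e : algebraMap B (Localization (W.map A.subtype)) (e : B) = 1 := by
  obtain ⟨w, hwW, hw0⟩ := hw
  have hB : (w : B) * (1 - (e : B)) = 0 := by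
    have := congrArg (A.subtype) hw0; simpa using this
  have hunit : IsUnit (algebraMap B (Localization (W.map A.subtype)) (w : B)) :=
    IsLocalization.map_units (Localization (W.map A.subtype)) (⟨(w : B), ⟨w, hwW, rfl⟩⟩ : W.map A.subtype)
  have h0 : algebraMap B (Localization (W.map A.subtype)) (w : B) *
      (1 - algebraMap B (Localization (W.map A.subtype)) (e : B)) = 0 := by
    rw [← map_one (algebraMap B (Localization (W.map A.subtype))), ← map_sub, ← map_mul, hB, map_zero]
  have := (IsUnit.mul_right_eq_zero hunit).mp h0
  linear_combination -this

include he hw hP3 in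
lemma phi_inv : ∀ v ∈ W, ∃ u : A,
    algebraMap B (Localization (W.map A.subtype)) (v : B) *
      algebraMap B (Localization (W.map A.subtype)) (u : B) = 1 := by
  intro v hv
  obtain ⟨u, hu⟩ := hP3 v hv
  refine ⟨u, ?_⟩
  have hB : (u : B) * (v : B) * (e : B) = (e : B) := by
    have := congrArg (A.subtype) hu; simpa using this
  have := congrArg (algebraMap B (Localization (W.map A.subtype))) hB
  rw [map_mul, map_mul, phi_e A W hw] at this
  linear_combination this

include he hw hP3 in
lemma phi_ker (b : B) :
    algebraMap B (Localization (W.map A.subtype)) b = 0 ↔ (e : B) * b = 0 := by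
  constructor
  · intro h
    obtain ⟨m, hm⟩ := (IsLocalization.map_eq_zero_iff (W.map A.subtype) _ b).mp h
    obtain ⟨v, hvW, hveq⟩ := m.2
    obtain ⟨u, hu⟩ := hP3 v hvW
    have hB : (u : B) * (v : B) * (e : B) = (e : B) := by
      have := congrArg (A.subtype) hu; simpa using this
    have hveq' : (v : B) = (m : B) := hveq
    have hm' : (v : B) * b = 0 := by rw [hveq']; exact hm
    linear_combination ((u : B) * (e : B)) * hm' - b * hB
  · intro h
    have hb : b = (1 - (e : B)) * b := by linear_combination h
    rw [hb, map_mul, map_sub, map_one, phi_e A W hw]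
    ring

include he hw hP3 in
lemma phi_surj : Function.Surjective (algebraMap B (Localization (W.map A.subtype))) := by
  intro x
  obtain ⟨⟨b, s⟩, hmk⟩ := IsLocalization.mk'_surjective (W.map A.subtype) x
  obtain ⟨v, hvW, hveq⟩ := s.2
  obtain ⟨u, hu⟩ := phi_inv A W he hw hP3 v hvW
  have hspec := IsLocalization.mk'_spec (Localization (W.map A.subtype)) b s
  rw [show IsLocalization.mk' (Localization (W.map A.subtype)) b s = x from hmk] at hspec
  refine ⟨b * (u : B), ?_⟩
  have hveq' : (v : B) = (s : B) := hveq
  have hs : algebraMap B (Localization (W.map A.subtype)) (s : B) =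
      algebraMap B (Localization (W.map A.subtype)) (v : B) := by rw [hveq']
  calc algebraMap B (Localization (W.map A.subtype)) (b * (u : B))
      = (x * algebraMap B (Localization (W.map A.subtype)) (s : B)) *
        algebraMap B (Localization (W.map A.subtype)) (u : B) := by
        rw [map_mul, hspec]
    _ = x * (algebraMap B (Localization (W.map A.subtype)) (v : B) *
        algebraMap B (Localization (W.map A.subtype)) (u : B)) := by rw [hs]; ring
    _ = x := by rw [hu, mul_one]

include he hw hP3 in
lemma range_eq : (locMap A W).range = A.map (algebraMap B (Localization (W.map A.subtype))) := by
  ext x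
  constructor
  · rintro ⟨y, rfl⟩
    obtain ⟨⟨a, s⟩, rfl⟩ := IsLocalization.mk'_surjective W y
    obtain ⟨u, hu⟩ := phi_inv A W he hw hP3 s s.2
    have hspec := IsLocalization.mk'_spec (Localization W) a s
    have h1 : locMap A W (IsLocalization.mk' (Localization W) a s) *
        algebraMap B (Localization (W.map A.subtype)) ((s : A) : B) *
        algebraMap B (Localization (W.map A.subtype)) (u : B) =
        algebraMap B (Localization (W.map A.subtype)) ((a * u : A) : B) := by
      rw [← locMap_algebraMap A W (s : A), ← map_mul, hspec, locMap_algebraMap, ← map_mul]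
      norm_cast
    rw [mul_assoc, hu, mul_one] at h1
    rw [h1]
    exact ⟨((a * u : A) : B), (a * u : A).2, rfl⟩
  · rintro ⟨b, hbA, rfl⟩
    exact ⟨algebraMap A (Localization W) ⟨b, hbA⟩, locMap_algebraMap A W ⟨b, hbA⟩⟩

end Loc
section Transfer
variable {R S : Type*} [CommRing R] [CommRing S] (f : R →+* S) (hf : Function.Surjective f)

include hf in
lemma map_mem_minimalPrimes {p : Ideal R} (hp : p ∈ minimalPrimes R)
    (hker : ∀ q : Ideal R, q.IsPrime → q ≤ p → RingHom.ker f ≤ q) :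
    p.map f ∈ minimalPrimes S ∧ (p.map f).comap f = p := by
  have hp1 : p.IsPrime := hp.1.1
  haveI := hp1
  have hkp := hker p hp1 le_rfl
  have hmapP : (p.map f).IsPrime := Ideal.map_isPrime_of_surjective hf hkp
  have hcomap : (p.map f).comap f = p := by
    rw [Ideal.comap_map_of_surjective f hf]
    exact sup_eq_left.mpr hkp
  refine ⟨⟨⟨hmapP, bot_le⟩, ?_⟩, hcomap⟩
  rintro q' ⟨hq', -⟩ hle
  haveI := hq'
  have hq : (q'.comap f).IsPrime := Ideal.IsPrime.comap f
  have hqle : q'.comap f ≤ p := hcomap ▸ Ideal.comap_mono hle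
  have heq : q'.comap f = p := le_antisymm hqle (hp.2 ⟨hq, bot_le⟩ hqle)
  calc p.map f = (q'.comap f).map f := by rw [heq]
  _ ≤ q' := le_of_eq (Ideal.map_comap_of_surjective f hf q')

include hf in
lemma comap_mem_minimalPrimes {p' : Ideal S} (hp' : p' ∈ minimalPrimes S)
    (hker : ∀ q : Ideal R, q.IsPrime → q ≤ p'.comap f → RingHom.ker f ≤ q) :
    p'.comap f ∈ minimalPrimes R := by
  have hp'1 : p'.IsPrime := hp'.1.1
  haveI := hp'1
  have hc : (p'.comap f).IsPrime := Ideal.IsPrime.comap f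
  refine ⟨⟨hc, bot_le⟩, ?_⟩
  rintro q ⟨hq, -⟩ hle
  haveI := hq
  have hkq := hker q hq hle
  have hq' : (q.map f).IsPrime := Ideal.map_isPrime_of_surjective hf hkq
  have hle' : q.map f ≤ p' := le_trans (Ideal.map_mono hle)
    (le_of_eq (Ideal.map_comap_of_surjective f hf p'))
  have heq : q.map f = p' := le_antisymm hle' (hp'.2 ⟨hq', bot_le⟩ hle')
  rw [← heq, Ideal.comap_map_of_surjective f hf]
  exact sup_le le_rfl hkq

end Transfer
section Main
variable {B : Type*} [CommRing B]

lemma fragile_imp_apparently (A : Subring B)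
    (hdim : ∀ P : Ideal A, P.IsPrime → P.IsMaximal)
    (hfin : (minimalPrimes A).Finite)
    (hfr : Fragile A) : ApparentlyFragile A := by
  intro C hAC hne
  have hx : ∃ x : B, x ∈ C ∧ x ∉ A := by
    by_contra h
    push_neg at h
    exact hne (le_antisymm hAC (fun y hy => h y hy))
  obtain ⟨x, hxC, hxA⟩ := hx
  -- the conductor ideal
  let I : Ideal A :=
    { carrier := {a : A | (a : B) * x ∈ A}
      add_mem' := fun {a b} ha hb => by
        show ((a + b : A) : B) * x ∈ A
        push_cast
        rw [add_mul]
        exact A.add_mem ha hb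
      zero_mem' := by
        show ((0 : A) : B) * x ∈ A
        push_cast
        rw [zero_mul]
        exact A.zero_mem
      smul_mem' := fun r a ha => by
        show ((r • a : A) : B) * x ∈ A
        have : ((r • a : A) : B) * x = (r : B) * ((a : B) * x) := by
          push_cast [smul_eq_mul]; ring
        rw [this]
        exact A.mul_mem r.2 ha }
  have hIne : I ≠ ⊤ := by
    intro h
    apply hxA
    have h1 : (1 : A) ∈ I := h ▸ Submodule.mem_top
    have : ((1 : A) : B) * x ∈ A := h1
    simpa using this
  obtain ⟨P, hPmax, hIP⟩ := Ideal.exists_le_maximal I hIne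
  haveI hP : P.IsPrime := hPmax.isPrime
  obtain ⟨e, he, hwkill, hP3⟩ := exists_good_idem hdim hfin P.primeCompl
  have h1eP : (1 : A) - e ∈ P := by
    obtain ⟨w, hwW, hw0⟩ := hwkill
    have : w * ((1 : A) - e) ∈ P := hw0 ▸ P.zero_mem
    exact (hP.mem_or_mem this).resolve_left hwW
  have heP : e ∉ P := by
    intro h
    apply hP.ne_top
    rw [Ideal.eq_top_iff_one]
    have := P.add_mem h h1eP
    simpa using this
  set W := P.primeCompl with hWdef
  set φ := algebraMap B (Localization (W.map A.subtype)) with hφ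
  have hrange : (locMap A W).range = A.map φ := range_eq A W he hwkill hP3
  set C' := C.map φ with hC'
  have hT : (locMap A W).range ≤ C' := by
    rw [hrange]
    rintro _ ⟨b, hbA, rfl⟩
    exact ⟨b, hAC hbA, rfl⟩
  have hne' : (locMap A W).range ≠ C' := by
    intro hEq
    have hx' : φ x ∈ C' := ⟨x, hxC, rfl⟩
    rw [← hEq, hrange] at hx'
    obtain ⟨a, haA, haeq⟩ := hx'
    have h0 : φ (x - a) = 0 := by rw [map_sub, haeq, sub_self]
    have hz : (e : B) * (x - a) = 0 := (phi_ker A W he hwkill hP3 _).mp h0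
    have hex : (e : B) * x ∈ A := by
      have h2 : (e : B) * x = (e : B) * a := by linear_combination hz
      rw [h2]
      exact A.mul_mem e.2 haA
    have heI : e ∈ I := hex
    exact heP (hIP heI)
  obtain ⟨p', hp'min, P', Q', hP', hQ', hPQ', hcP', hcQ'⟩ := hfr P hP C' hT hne'
  haveI := hP'
  haveI := hQ'
  -- the restricted maps
  let τA : A →+* ((locMap A W).range) :=
    RingHom.codRestrict (φ.comp A.subtype) _
      (fun a => by rw [hrange]; exact ⟨a, a.2, rfl⟩)
  let τC : C →+* C' :=
    RingHom.codRestrict (φ.comp C.subtype) _ (fun c => ⟨c, c.2, rfl⟩)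
  have hτA_surj : Function.Surjective τA := by
    rintro ⟨y, hy⟩
    rw [hrange] at hy
    obtain ⟨b, hbA, rfl⟩ := hy
    exact ⟨⟨b, hbA⟩, Subtype.ext rfl⟩
  have hτC_surj : Function.Surjective τC := by
    rintro ⟨y, hy⟩
    obtain ⟨b, hbC, rfl⟩ := hy
    exact ⟨⟨b, hbC⟩, Subtype.ext rfl⟩
  set p := p'.comap τA with hpdef
  haveI hpP : p.IsPrime := (haveI := hp'min.1.1; Ideal.IsPrime.comap τA)
  have h1ep : (1 : A) - e ∈ p := by
    show τA ((1 : A) - e) ∈ p'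
    have hval : τA ((1 : A) - e) = 0 := by
      apply Subtype.ext
      show φ (((1 : A) - e : A) : B) = 0
      push_cast
      rw [map_sub, map_one, phi_e A W hwkill]
      ring
    rw [hval]
    exact p'.zero_mem
  have hep : e ∉ p := by
    intro h
    apply hpP.ne_top
    rw [Ideal.eq_top_iff_one]
    have := p.add_mem h h1ep
    simpa using this
  have hkerA : ∀ q : Ideal A, q.IsPrime → q ≤ p → RingHom.ker τA ≤ q := by
    intro q hq hle a ha
    have h0 : φ (a : B) = 0 := congrArg Subtype.val ha
    have h2 : (e : B) * (a : B) = 0 := (phi_ker A W he hwkill hP3 _).mp h0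
    have h3 : e * a = 0 := by
      apply Subtype.ext
      push_cast
      exact h2
    rcases hq.mem_or_mem (h3 ▸ q.zero_mem) with h | h
    · exact absurd (hle h) hep
    · exact h
  have hpmin : p ∈ minimalPrimes A :=
    comap_mem_minimalPrimes τA hτA_surj hp'min (fun q hq hle => hkerA q hq hle)
  have hsq : τC.comp (Subring.inclusion hAC) = (Subring.inclusion hT).comp τA := by
    ext a
    rfl
  refine ⟨p, hpmin, P'.comap τC, Q'.comap τC, Ideal.IsPrime.comap τC, Ideal.IsPrime.comap τC,
    ?_, ?_, ?_⟩
  · intro h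
    apply hPQ'
    have := congrArg (Ideal.map τC) h
    rwa [Ideal.map_comap_of_surjective τC hτC_surj, Ideal.map_comap_of_surjective τC hτC_surj]
      at this
  · rw [Ideal.comap_comap, hsq, ← Ideal.comap_comap, hcP', hpdef]
  · rw [Ideal.comap_comap, hsq, ← Ideal.comap_comap, hcQ', hpdef]

end Main
section Main2
variable {B : Type*} [CommRing B]

set_option maxHeartbeats 1000000 in
lemma apparently_imp_globally (A : Subring B)
    (hdim : ∀ P : Ideal A, P.IsPrime → P.IsMaximal)
    (hfin : (minimalPrimes A).Finite)
    (hAF : ApparentlyFragile A) : GloballyFragile A := by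
  intro W
  obtain ⟨e, he, hwkill, hP3⟩ := exists_good_idem hdim hfin W
  set φ := algebraMap B (Localization (W.map A.subtype)) with hφ
  have hrange : (locMap A W).range = A.map φ := range_eq A W he hwkill hP3
  have heB : (e : B) * (e : B) = (e : B) := by
    have := congrArg (A.subtype) he; simpa using this
  intro C' hT hne'
  -- pull back C'
  let C : Subring B :=
    { carrier := {b : B | φ b ∈ C' ∧ (1 - (e : B)) * b ∈ A}
      one_mem' := by
        constructor
        · rw [map_one]; exact C'.one_mem
        · rw [mul_one]
          have : (1 : B) - (e : B) = (((1 : A) - e : A) : B) := by push_cast; ring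
          rw [this]; exact ((1 : A) - e).2
      mul_mem' := fun {b c} hb hc => by
        constructor
        · rw [map_mul]; exact C'.mul_mem hb.1 hc.1
        · have : (1 - (e : B)) * (b * c) = ((1 - (e : B)) * b) * ((1 - (e : B)) * c) := by
            linear_combination -(b * c) * heB
          rw [this]; exact A.mul_mem hb.2 hc.2
      zero_mem' := by
        constructor
        · rw [map_zero]; exact C'.zero_mem
        · rw [mul_zero]; exact A.zero_mem
      add_mem' := fun {b c} hb hc => by
        constructor
        · rw [map_add]; exact C'.add_mem hb.1 hc.1
        · rw [mul_add]; exact A.add_mem hb.2 hc.2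
      neg_mem' := fun {b} hb => by
        constructor
        · rw [map_neg]; exact C'.neg_mem hb.1
        · rw [mul_neg]; exact A.neg_mem hb.2 }
  have hmemC : ∀ b : B, b ∈ C ↔ (φ b ∈ C' ∧ (1 - (e : B)) * b ∈ A) := fun b => Iff.rfl
  have hAC : A ≤ C := by
    intro a ha
    rw [hmemC]
    constructor
    · exact hT (by rw [hrange]; exact ⟨a, ha, rfl⟩)
    · have : (1 - (e : B)) * a = (((1 : A) - e) * ⟨a, ha⟩ : A) := by push_cast; ring
      rw [this]; exact (((1 : A) - e) * ⟨a, ha⟩).2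
  have hAneC : A ≠ C := by
    intro hEq
    have hx' : ∃ y, y ∈ C' ∧ y ∉ (locMap A W).range := by
      by_contra h
      push_neg at h
      exact hne' (le_antisymm hT (fun y hy => h y hy))
    obtain ⟨y, hyC', hyR⟩ := hx'
    obtain ⟨b, rfl⟩ := phi_surj A W he hwkill hP3 y
    have hcC : (e : B) * b ∈ C := by
      rw [hmemC]
      constructor
      · rw [map_mul, phi_e A W hwkill, one_mul]; exact hyC'
      · have h9 : (1 - (e : B)) * ((e : B) * b) = 0 := by linear_combination -b * heB
        rw [h9]; exact A.zero_mem
    apply hyR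
    have hcA : (e : B) * b ∈ A := hEq.ge hcC
    rw [hrange]
    refine ⟨(e : B) * b, hcA, ?_⟩
    rw [map_mul, phi_e A W hwkill, one_mul]
  obtain ⟨p, hpmin, P, Q, hP, hQ, hPQ, hcP, hcQ⟩ := hAF C hAC hAneC
  haveI hpP : p.IsPrime := hpmin.1.1
  by_cases hep : e ∈ p
  · exfalso
    apply hPQ
    have key : ∀ (Rp : Ideal C), Rp.IsPrime → Rp.comap (Subring.inclusion hAC) = p →
        ∀ c : C, (c ∈ Rp ↔ (⟨(1 - (e : B)) * (c : B), c.2.2⟩ : A) ∈ p) := by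
      intro Rp hRp hcomap c
      have heCP : Subring.inclusion hAC e ∈ Rp := by
        rw [← hcomap] at hep; exact hep
      have hsplit : c = Subring.inclusion hAC e * c +
          Subring.inclusion hAC ⟨(1 - (e : B)) * (c : B), c.2.2⟩ := by
        apply Subtype.ext
        show (c : B) = (e : B) * (c : B) + (1 - (e : B)) * (c : B)
        ring
      constructor
      · intro hc
        have h2 : Subring.inclusion hAC ⟨(1 - (e : B)) * (c : B), c.2.2⟩ ∈ Rp := by
          rw [hsplit] at hc
          have := Rp.sub_mem hc (Rp.mul_mem_right c heCP)
          simpa using this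
        rw [← hcomap]
        exact h2
      · intro hc
        rw [← hcomap] at hc
        rw [hsplit]
        exact Rp.add_mem (Rp.mul_mem_right c heCP) hc
    ext c
    rw [key P hP hcP c, key Q hQ hcQ c]
  · -- e ∉ p
    have h1ep : (1 : A) - e ∈ p := by
      have h0 : e * ((1 : A) - e) ∈ p := by
        have : e * ((1 : A) - e) = 0 := by linear_combination -he
        rw [this]; exact p.zero_mem
      exact (hpP.mem_or_mem h0).resolve_left hep
    let τA : A →+* ((locMap A W).range) :=
      RingHom.codRestrict (φ.comp A.subtype) _
        (fun a => by rw [hrange]; exact ⟨a, a.2, rfl⟩)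
    let τC : C →+* C' :=
      RingHom.codRestrict (φ.comp C.subtype) _ (fun c => c.2.1)
    have hτA_surj : Function.Surjective τA := by
      rintro ⟨y, hy⟩
      rw [hrange] at hy
      obtain ⟨b, hbA, rfl⟩ := hy
      exact ⟨⟨b, hbA⟩, Subtype.ext rfl⟩
    have hτC_surj : Function.Surjective τC := by
      rintro ⟨y, hy⟩
      obtain ⟨b, rfl⟩ := phi_surj A W he hwkill hP3 y
      have hcC : (e : B) * b ∈ C := by
        rw [hmemC]
        constructor
        · rw [map_mul, phi_e A W hwkill, one_mul]; exact hy
        · have : (1 - (e : B)) * ((e : B) * b) = 0 := by linear_combination -b * heB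
          rw [this]; exact A.zero_mem
      refine ⟨⟨(e : B) * b, hcC⟩, Subtype.ext ?_⟩
      show φ ((e : B) * b) = φ b
      rw [map_mul, phi_e A W hwkill, one_mul]
    have hkerA : ∀ q : Ideal A, q.IsPrime → q ≤ p → RingHom.ker τA ≤ q := by
      intro q hq hle a ha
      have h0 : φ (a : B) = 0 := congrArg Subtype.val ha
      have h2 : (e : B) * (a : B) = 0 := (phi_ker A W he hwkill hP3 _).mp h0
      have h3 : e * a = 0 := by
        apply Subtype.ext; push_cast; exact h2
      rcases hq.mem_or_mem (h3 ▸ q.zero_mem) with h | h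
      · exact absurd (hle h) hep
      · exact h
    have hkerC : ∀ (R0 : Ideal C), R0.IsPrime → R0.comap (Subring.inclusion hAC) = p →
        RingHom.ker τC ≤ R0 := by
      intro R0 hR0 hcomap c hc
      have h0 : φ (c : B) = 0 := congrArg Subtype.val hc
      have h2 : (e : B) * (c : B) = 0 := (phi_ker A W he hwkill hP3 _).mp h0
      have h3 : Subring.inclusion hAC e * c = 0 := by
        apply Subtype.ext
        show (e : B) * (c : B) = 0
        exact h2
      rcases hR0.mem_or_mem (h3 ▸ R0.zero_mem) with h | h
      · exfalso
        apply hep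
        rw [← hcomap]
        exact h
      · exact h
    obtain ⟨hp'min, hp'comap⟩ :=
      map_mem_minimalPrimes τA hτA_surj hpmin (fun q hq hle => hkerA q hq hle)
    haveI := hP
    haveI := hQ
    have hPker := hkerC P hP hcP
    have hQker := hkerC Q hQ hcQ
    have hP' : (P.map τC).IsPrime := Ideal.map_isPrime_of_surjective hτC_surj hPker
    have hQ' : (Q.map τC).IsPrime := Ideal.map_isPrime_of_surjective hτC_surj hQker
    have hPcm : (P.map τC).comap τC = P := by
      rw [Ideal.comap_map_of_surjective τC hτC_surj]
      exact sup_eq_left.mpr hPker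
    have hQcm : (Q.map τC).comap τC = Q := by
      rw [Ideal.comap_map_of_surjective τC hτC_surj]
      exact sup_eq_left.mpr hQker
    have hsq : τC.comp (Subring.inclusion hAC) = (Subring.inclusion hT).comp τA := by
      ext a; rfl
    have hcontr : ∀ (R0 : Ideal C), R0.comap (Subring.inclusion hAC) = p →
        ((R0.comap (Subring.inclusion hAC) = p) → True) → (R0.map τC).comap τC = R0 →
        (R0.map τC).comap (Subring.inclusion hT) = p.map τA := by
      intro R0 hcm _ hmc
      apply Ideal.comap_injective_of_surjective τA hτA_surj
      rw [hp'comap, Ideal.comap_comap, ← hsq, ← Ideal.comap_comap, hmc, hcm]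
    refine ⟨p.map τA, hp'min, P.map τC, Q.map τC, hP', hQ', ?_, ?_, ?_⟩
    · intro h
      apply hPQ
      rw [← hPcm, ← hQcm, h]
    · exact hcontr P hcP (fun _ => trivial) hPcm
    · exact hcontr Q hcQ (fun _ => trivial) hQcm

end Main2

/-- For a zero-dimensional ring `A` with finitely many minimal primes and an
integral extension `A ⊆ B`, the three notions of fragility coincide. -/
theorem fragilities_coincide_of_dimZero {B : Type*} [CommRing B] (A : Subring B)
    (hint : Algebra.IsIntegral A B)
    (hdim : ∀ P : Ideal A, P.IsPrime → P.IsMaximal)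
    (hfin : (minimalPrimes A).Finite) :
    (Fragile A ↔ ApparentlyFragile A) ∧ (ApparentlyFragile A ↔ GloballyFragile A) := by
  have h1 : ApparentlyFragile A → GloballyFragile A := apparently_imp_globally A hdim hfin
  have h2 : Fragile A → ApparentlyFragile A := fragile_imp_apparently A hdim hfin
  have h3 : GloballyFragile A → Fragile A := fun hGF P hP => hGF (@Ideal.primeCompl _ _ P hP)
  exact ⟨⟨h2, fun hAF => h3 (h1 hAF)⟩, ⟨h1, fun hGF => h2 (h3 hGF)⟩⟩
end

section
/- Let C ⊆ B be an integral extension of commutative rings. Then there exists a ring A with C ⊆ A ⊆ B such that the extension A ⊆ B is apparently fragile and such that under the contraction map Spec A → Spec C, every minimal prime of C has exactly one preimage in Spec A. -/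
/-- For any integral extension `C ⊆ B` there is an intermediate ring
`C ⊆ A ⊆ B` such that `A ⊆ B` is apparently fragile and every minimal prime of `C` has
exactly one preimage under `Spec A → Spec C`. -/
theorem exists_apparentlyFragile_intermediate {B : Type*} [CommRing B] (C : Subring B)
    (hint : Algebra.IsIntegral C B) :
    ∃ A : Subring B, ∃ hCA : C ≤ A, ApparentlyFragile A ∧
      ∀ p ∈ minimalPrimes C,
        ∃! P : Ideal A, P.IsPrime ∧ P.comap (Subring.inclusion hCA) = p := by
  
  classical
  -- every intermediate ring is integral over C
  have hInt : ∀ (D : Subring B) (h : C ≤ D) (x : D),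
      (Subring.inclusion h).IsIntegralElem x := by
    intro D h x
    obtain ⟨q, hq, hev⟩ := hint.isIntegral (x : B)
    refine ⟨q, hq, ?_⟩
    have : D.subtype (Polynomial.eval₂ (Subring.inclusion h) x q) = 0 := by
      rw [Polynomial.hom_eval₂]
      exact hev
    exact Subtype.ext this
  -- lying over: primes of C lift to any intermediate ring
  have lyingOver : ∀ (D : Subring B) (h : C ≤ D) (p : Ideal C), p.IsPrime →
      ∃ P : Ideal D, P.IsPrime ∧ P.comap (Subring.inclusion h) = p := by
    intro D h p hp
    letI : Algebra C D := (Subring.inclusion h).toAlgebra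
    haveI : Algebra.IsIntegral C D := ⟨fun x => hInt D h x⟩
    haveI := hp
    obtain ⟨Q, -, hQp, hQc⟩ := Ideal.exists_ideal_over_prime_of_isIntegral p (⊥ : Ideal D)
      (by
        intro x hx
        have hx0 : Subring.inclusion h x = 0 := hx
        have hv : (x : B) = 0 := congrArg Subtype.val hx0
        rw [show x = 0 from Subtype.ext hv]; exact p.zero_mem)
    exact ⟨Q, hQp, hQc⟩
  -- the collection of intermediate rings with unique primes over minimal primes of C
  set S : Set (Subring B) := {D | ∃ h : C ≤ D, ∀ p ∈ minimalPrimes C,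
      ∃! P : Ideal D, P.IsPrime ∧ P.comap (Subring.inclusion h) = p} with hS
  have hCS : C ∈ S := by
    refine ⟨le_refl C, fun p hp => ?_⟩
    have hcom : ∀ P : Ideal C, P.comap (Subring.inclusion (le_refl C)) = P := by
      intro P; ext x; exact Iff.rfl
    exact ⟨p, ⟨hp.1.1, hcom p⟩, fun P hP => by rw [← hcom P]; exact hP.2⟩
  -- chains in S have upper bounds in S
  have hchain : ∀ c ⊆ S, IsChain (· ≤ ·) c → ∀ y ∈ c, ∃ ub ∈ S, ∀ z ∈ c, z ≤ ub := by
    intro c hcS hc y hy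
    refine ⟨sSup c, ?_, fun z hz => le_sSup hz⟩
    have hCsup : C ≤ sSup c := le_trans (hcS hy).choose (le_sSup hy)
    refine ⟨hCsup, fun p hp => ?_⟩
    obtain ⟨P, hPp, hPc⟩ := lyingOver (sSup c) hCsup p hp.1.1
    refine ⟨P, ⟨hPp, hPc⟩, ?_⟩
    -- uniqueness
    suffices key : ∀ P₁ P₂ : Ideal ↥(sSup c),
        P₁.IsPrime → P₁.comap (Subring.inclusion hCsup) = p →
        P₂.IsPrime → P₂.comap (Subring.inclusion hCsup) = p → P₁ ≤ P₂ by
      intro Q hQ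
      exact le_antisymm (key Q P hQ.1 hQ.2 hPp hPc) (key P Q hPp hPc hQ.1 hQ.2)
    intro P₁ P₂ h₁ hc₁ h₂ hc₂ b hb
    obtain ⟨D, hDc, hbD⟩ := (Subring.mem_sSup_of_directedOn ⟨y, hy⟩ hc.directedOn).1 b.2
    obtain ⟨hCD, hUniq⟩ := hcS hDc
    have hDsup : D ≤ sSup c := le_sSup hDc
    have hcomp : ∀ (P : Ideal ↥(sSup c)),
        (P.comap (Subring.inclusion hDsup)).comap (Subring.inclusion hCD)
          = P.comap (Subring.inclusion hCsup) := by
      intro P; rw [Ideal.comap_comap]; rfl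
    haveI := h₁; haveI := h₂
    have e : P₁.comap (Subring.inclusion hDsup) = P₂.comap (Subring.inclusion hDsup) := by
      obtain ⟨Pd, hPd, hPdU⟩ := hUniq p hp
      have e1 := hPdU (P₁.comap (Subring.inclusion hDsup))
        ⟨Ideal.comap_isPrime _ _, by rw [hcomp, hc₁]⟩
      have e2 := hPdU (P₂.comap (Subring.inclusion hDsup))
        ⟨Ideal.comap_isPrime _ _, by rw [hcomp, hc₂]⟩
      rw [e1, e2]
    have hb' : (⟨(b : B), hbD⟩ : D) ∈ P₁.comap (Subring.inclusion hDsup) := by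
      show Subring.inclusion hDsup ⟨(b : B), hbD⟩ ∈ P₁
      have : Subring.inclusion hDsup ⟨(b : B), hbD⟩ = b := Subtype.ext rfl
      rwa [this]
    rw [e] at hb'
    have h2 : Subring.inclusion hDsup ⟨(b : B), hbD⟩ = b := Subtype.ext rfl
    exact h2 ▸ Ideal.mem_comap.mp hb'
  obtain ⟨A, hCA', hAmax⟩ := zorn_le_nonempty₀ S hchain C hCS
  obtain ⟨hCA, hA⟩ := hAmax.prop
  refine ⟨A, hCA, ?_, hA⟩
  intro C' hAC' hne
  -- C' is not in S
  have hC'S : C' ∉ S := fun hmem => hne (le_antisymm hAC' (hAmax.le_of_ge hmem hAC'))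
  have hCC' : C ≤ C' := hCA.trans hAC'
  -- find a minimal prime of C where uniqueness fails in C'
  have : ∃ p ∈ minimalPrimes C, ¬ ∃! P : Ideal C', P.IsPrime ∧
      P.comap (Subring.inclusion hCC') = p := by
    by_contra hcon
    push_neg at hcon
    exact hC'S ⟨hCC', hcon⟩
  obtain ⟨p, hp, hnu⟩ := this
  obtain ⟨P, hPp, hPc⟩ := lyingOver C' hCC' p hp.1.1
  have : ∃ Q : Ideal C', (Q.IsPrime ∧ Q.comap (Subring.inclusion hCC') = p) ∧ Q ≠ P := by
    by_contra hcon
    push_neg at hcon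
    exact hnu ⟨P, ⟨hPp, hPc⟩, fun Q hQ => hcon Q hQ⟩
  obtain ⟨Q, ⟨hQp, hQc⟩, hQP⟩ := this
  -- the unique prime of A over p
  obtain ⟨Pu, ⟨hPup, hPuc⟩, hPuu⟩ := hA p hp
  -- composition lemma
  have hcomp : ∀ (R : Ideal C'),
      (R.comap (Subring.inclusion hAC')).comap (Subring.inclusion hCA)
        = R.comap (Subring.inclusion hCC') := by
    intro R; rw [Ideal.comap_comap]; rfl
  haveI := hPp; haveI := hQp; haveI := hPup
  -- Pu is a minimal prime of A
  have hPumin : Pu ∈ minimalPrimes A := by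
    obtain ⟨P₀, hP₀m, hP₀le⟩ := Ideal.exists_minimalPrimes_le (I := (⊥ : Ideal A)) (J := Pu) bot_le
    haveI := hP₀m.1.1
    have hle : P₀.comap (Subring.inclusion hCA) ≤ p := hPuc ▸ Ideal.comap_mono hP₀le
    have heq : P₀.comap (Subring.inclusion hCA) = p :=
      le_antisymm hle (hp.2 ⟨Ideal.comap_isPrime _ _, bot_le⟩ hle)
    have : P₀ = Pu := hPuu P₀ ⟨hP₀m.1.1, heq⟩
    rwa [← this]
  refine ⟨Pu, hPumin, P, Q, hPp, hQp, Ne.symm hQP, ?_, ?_⟩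
  · exact hPuu (P.comap (Subring.inclusion hAC')) ⟨Ideal.comap_isPrime _ _, by rw [hcomp, hPc]⟩
  · exact hPuu (Q.comap (Subring.inclusion hAC')) ⟨Ideal.comap_isPrime _ _, by rw [hcomp, hQc]⟩
end

section
/- Let S be an integral domain such that the set consisting of the units of S together with 0 forms a subfield k of S. Let J be a prime ideal of S such that every unit of S/J lies in the image of k in S/J. Let R be the pullback of the diagram k → S/J ← S, i.e., R = k + J = {s ∈ S : s + J ∈ image of k}. Then W = R ∖ J is a saturated multiplicatively closed subset of S, i.e., W is multiplicatively closed and whenever s, s′ ∈ S with s·s′ ∈ W, one has s ∈ W. -/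
/-- Let `S` be a domain whose units together with `0` form a subfield `k`,
and `J` a prime ideal of `S` such that every unit of `S/J` lies in the image of `k`.  If `R`
is the pullback of `k → S/J ← S` (i.e. `R = k + J`), then `W = R ∖ J` is a saturated
multiplicatively closed subset of `S`. -/
theorem saturated_multiplicative_complement {S : Type*} [CommRing S] [IsDomain S]
    (k : Subring S) (hk : (k : Set S) = {s : S | IsUnit s ∨ s = 0}) (hkf : IsField k)
    (J : Ideal S) (hJ : J.IsPrime)
    (hunits : ∀ x : S ⧸ J, IsUnit x → x ∈ k.map (Ideal.Quotient.mk J))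
    (R : Subring S) (hR : R = (k.map (Ideal.Quotient.mk J)).comap (Ideal.Quotient.mk J))
    (W : Set S) (hW : W = (R : Set S) \ (J : Set S)) :
    (1 : S) ∈ W ∧ (∀ a ∈ W, ∀ b ∈ W, a * b ∈ W) ∧
      (∀ s s' : S, s * s' ∈ W → s ∈ W) := by
  have h1J : (1 : S) ∉ J := fun h => hJ.ne_top (J.eq_top_iff_one.mpr h)
  subst hW; subst hR
  set f := Ideal.Quotient.mk J with hf
  refine ⟨⟨Subring.mem_comap.mpr (Subring.mem_map.mpr ⟨1, k.one_mem, rfl⟩), h1J⟩, ?_, ?_⟩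
  · rintro a ⟨haR, haJ⟩ b ⟨hbR, hbJ⟩
    refine ⟨Subring.mem_comap.mpr ?_, fun h => (hJ.mem_or_mem h).elim haJ hbJ⟩
    obtain ⟨c, hc, hcc⟩ := Subring.mem_map.mp (Subring.mem_comap.mp haR)
    obtain ⟨d, hd, hdd⟩ := Subring.mem_map.mp (Subring.mem_comap.mp hbR)
    exact Subring.mem_map.mpr ⟨c * d, k.mul_mem hc hd, by rw [map_mul, hcc, hdd, map_mul]⟩
  · rintro s s' ⟨hsR, hJ'⟩
    have hsJ : s ∉ J := fun h => hJ' (J.mul_mem_right _ h)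
    refine ⟨Subring.mem_comap.mpr ?_, hsJ⟩
    obtain ⟨c, hc, hcc⟩ := Subring.mem_map.mp (Subring.mem_comap.mp hsR)
    have hcJ : c ∉ J := by
      intro h
      apply hJ'
      have h0 : f (s * s') = 0 := by
        rw [← hcc]; exact Ideal.Quotient.eq_zero_iff_mem.mpr h
      exact Ideal.Quotient.eq_zero_iff_mem.mp h0
    have hcu : IsUnit c := by
      have hc' : c ∈ {s : S | IsUnit s ∨ s = 0} := hk ▸ hc
      rcases hc' with h | h
      · exact h
      · exact absurd (h ▸ J.zero_mem) hcJ
    have hu : IsUnit (f s) :=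
      isUnit_of_mul_isUnit_left (y := f s') (by rw [← map_mul, ← hcc]; exact hcu.map f)
    exact hunits _ hu
end
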